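/- The function g(μθ, t | x₀) = (2(μθ−x₀)/(σθ^{3/2}√π)) · e^{−t/θ} (1−e^{−2t/θ})^{−3/2} · exp( −(x₀−μθ)² e^{−2t/θ} / (σ²θ(1−e^{−2t/θ})) ) is a probability density in t on (0,∞): it is nonnegative and ∫_0^∞ g(μθ, t | x₀) dt = 1, provided x₀ < μθ. -/

import Mathlib

open Real MeasureTheory Set

/-- Closed-form first passage time density of the OU process to the constant
threshold S = μθ. -/
noncomputable def fptDensityMuTheta (θ σ μ x₀ t : ℝ) : ℝ :=
  (2 * (μ * θ - x₀) / (σ * θ ^ ((3 : ℝ) / 2) * Real.sqrt π)) *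
    (Real.exp (-t / θ) / (1 - Real.exp (-2 * t / θ)) ^ ((3 : ℝ) / 2)) *
    Real.exp (-((x₀ - μ * θ) ^ 2 * Real.exp (-2 * t / θ)) /
      (σ ^ 2 * θ * (1 - Real.exp (-2 * t / θ))))

lemma rpow_three_halves {x : ℝ} (hx : 0 < x) :
    x ^ ((3 : ℝ) / 2) = x * Real.sqrt x := by
  have h : ((3 : ℝ) / 2) = 1 + 1 / 2 := by norm_num
  rw [h, Real.rpow_add hx, Real.rpow_one, ← Real.sqrt_eq_rpow]

theorem fptDensityMuTheta_is_pdf (θ σ μ x₀ : ℝ) (hθ : 0 < θ) (hσ : 0 < σ)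
    (hx : x₀ < μ * θ) :
    (∀ t ∈ Set.Ioi (0 : ℝ), 0 ≤ fptDensityMuTheta θ σ μ x₀ t) ∧
      ∫ t in Set.Ioi (0 : ℝ), fptDensityMuTheta θ σ μ x₀ t = 1 := by
  have ha0 : 0 < μ * θ - x₀ := by linarith
  have hsθ : 0 < Real.sqrt θ := Real.sqrt_pos.2 hθ
  set a : ℝ := μ * θ - x₀ with ha
  set C : ℝ := a / (σ * Real.sqrt θ) with hC
  have hC0 : 0 < C := div_pos ha0 (mul_pos hσ hsθ)
  -- basic facts for t > 0
  have hE2 : ∀ t : ℝ, 0 < t → Real.exp (-2 * t / θ) < 1 := by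
    intro t ht
    rw [Real.exp_lt_one_iff]
    exact div_neg_of_neg_of_pos (by linarith) hθ
  have hE2' : ∀ t : ℝ, 0 < t → 0 < 1 - Real.exp (-2 * t / θ) := by
    intro t ht; linarith [hE2 t ht]
  constructor
  · intro t ht
    have h2 := hE2' t ht
    unfold fptDensityMuTheta
    apply mul_nonneg
    apply mul_nonneg
    · apply div_nonneg (by linarith) (by positivity)
    · exact div_nonneg (Real.exp_pos _).le (Real.rpow_nonneg h2.le _)
    · exact (Real.exp_pos _).le
  -- the substitution function
  set f : ℝ → ℝ := fun t => C * (Real.sqrt (Real.exp (2 * t / θ) - 1))⁻¹ with hf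
  have hh : ∀ t : ℝ, 0 < t → 0 < Real.exp (2 * t / θ) - 1 := by
    intro t ht
    have : (1 : ℝ) = Real.exp 0 := (Real.exp_zero).symm
    rw [this]
    have : (0 : ℝ) < 2 * t / θ := by positivity
    simpa using Real.exp_lt_exp.2 this
  set f' : ℝ → ℝ := fun t =>
    C * (-(Real.exp (2 * t / θ) * (2 / θ) / (2 * Real.sqrt (Real.exp (2 * t / θ) - 1))) /
      (Real.sqrt (Real.exp (2 * t / θ) - 1)) ^ 2) with hf'
  have hderiv : ∀ t ∈ Set.Ioi (0 : ℝ), HasDerivWithinAt f (f' t) (Set.Ioi 0) t := by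
    intro t ht
    have ht' : 0 < t := ht
    have h0 := hh t ht'
    have hs0 : 0 < Real.sqrt (Real.exp (2 * t / θ) - 1) := Real.sqrt_pos.2 h0
    have d1 : HasDerivAt (fun t : ℝ => 2 * t / θ) (2 / θ) t := by
      simpa using ((hasDerivAt_id t).const_mul 2).div_const θ
    have d2 : HasDerivAt (fun t : ℝ => Real.exp (2 * t / θ) - 1)
        (Real.exp (2 * t / θ) * (2 / θ)) t := (d1.exp).sub_const 1
    have d3 : HasDerivAt (fun t : ℝ => Real.sqrt (Real.exp (2 * t / θ) - 1))
        ((Real.exp (2 * t / θ) * (2 / θ)) / (2 * Real.sqrt (Real.exp (2 * t / θ) - 1))) t :=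
      d2.sqrt h0.ne'
    have d4 := (d3.inv hs0.ne').const_mul C
    exact d4.hasDerivWithinAt
  -- injectivity
  have hinj : Set.InjOn f (Set.Ioi 0) := by
    intro t₁ ht₁ t₂ ht₂ heq
    have h₁ := hh t₁ ht₁
    have h₂ := hh t₂ ht₂
    have hs₁ : 0 < Real.sqrt (Real.exp (2 * t₁ / θ) - 1) := Real.sqrt_pos.2 h₁
    have hs₂ : 0 < Real.sqrt (Real.exp (2 * t₂ / θ) - 1) := Real.sqrt_pos.2 h₂
    have hseq : Real.sqrt (Real.exp (2 * t₁ / θ) - 1) =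
        Real.sqrt (Real.exp (2 * t₂ / θ) - 1) := by
      have heq' : C * (Real.sqrt (Real.exp (2 * t₁ / θ) - 1))⁻¹ =
          C * (Real.sqrt (Real.exp (2 * t₂ / θ) - 1))⁻¹ := heq
      exact inv_injective (mul_left_cancel₀ hC0.ne' heq')
    have : Real.exp (2 * t₁ / θ) - 1 = Real.exp (2 * t₂ / θ) - 1 := by
      have := congrArg (fun x => x ^ 2) hseq
      simpa [Real.sq_sqrt h₁.le, Real.sq_sqrt h₂.le] using this
    have hexp : Real.exp (2 * t₁ / θ) = Real.exp (2 * t₂ / θ) := by linarith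
    have h2 := Real.exp_injective hexp
    field_simp [hθ.ne'] at h2
    linarith
  -- image
  have himg : f '' Set.Ioi 0 = Set.Ioi 0 := by
    apply Set.Subset.antisymm
    · rintro y ⟨t, ht, rfl⟩
      have := hh t ht
      have hs : 0 < Real.sqrt (Real.exp (2 * t / θ) - 1) := Real.sqrt_pos.2 this
      exact mul_pos hC0 (inv_pos.2 hs)
    · intro y hy
      have hy' : (0 : ℝ) < y := hy
      refine ⟨θ / 2 * Real.log (1 + C ^ 2 / y ^ 2), ?_, ?_⟩
      · have h1 : (0 : ℝ) < C ^ 2 / y ^ 2 := by positivity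
        have : 0 < Real.log (1 + C ^ 2 / y ^ 2) := Real.log_pos (by linarith)
        exact mul_pos (by positivity) this
      · have harg : 2 * (θ / 2 * Real.log (1 + C ^ 2 / y ^ 2)) / θ =
            Real.log (1 + C ^ 2 / y ^ 2) := by field_simp
        have h1 : (0 : ℝ) < 1 + C ^ 2 / y ^ 2 := by positivity
        simp only [hf, harg, Real.exp_log h1]
        have : (1 : ℝ) + C ^ 2 / y ^ 2 - 1 = (C / y) ^ 2 := by field_simp; ring
        rw [this, Real.sqrt_sq (by positivity)]
        field_simp
  -- the gaussian integrand
  set g : ℝ → ℝ := fun s => 2 / Real.sqrt π * Real.exp (-s ^ 2) with hg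
  have hgauss : ∫ s in Set.Ioi (0 : ℝ), g s = 1 := by
    rw [hg, MeasureTheory.integral_const_mul]
    have : ∀ s : ℝ, Real.exp (-s ^ 2) = Real.exp (-1 * s ^ 2) := by intro s; ring_nf
    simp_rw [this]
    rw [integral_gaussian_Ioi, div_one]
    have hπ : Real.sqrt π ≠ 0 := (Real.sqrt_pos.2 Real.pi_pos).ne'
    field_simp
  -- pointwise identity
  have hpt : ∀ t ∈ Set.Ioi (0 : ℝ), |f' t| • g (f t) = fptDensityMuTheta θ σ μ x₀ t := by
    intro t ht
    have ht' : 0 < t := ht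
    have hE : 0 < Real.exp (-t / θ) := Real.exp_pos _
    set E : ℝ := Real.exp (-t / θ) with hEdef
    have hE2sq : Real.exp (-2 * t / θ) = E ^ 2 := by
      rw [hEdef, sq, ← Real.exp_add]
      congr 1
      ring
    have hE1 : E < 1 := by
      rw [hEdef, Real.exp_lt_one_iff]
      exact div_neg_of_neg_of_pos (by linarith) hθ
    have h1E : 0 < 1 - E ^ 2 := by nlinarith
    have hEinv : Real.exp (2 * t / θ) * E ^ 2 = 1 := by
      rw [hEdef, sq, ← Real.exp_add, ← Real.exp_add,
        show 2 * t / θ + (-t / θ + -t / θ) = 0 by ring, Real.exp_zero]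
    have hhval : Real.exp (2 * t / θ) - 1 = (1 - E ^ 2) / E ^ 2 := by
      field_simp
      nlinarith [hEinv]
    have hsub : Real.sqrt (Real.exp (2 * t / θ) - 1) = Real.sqrt (1 - E ^ 2) / E := by
      rw [hhval, Real.sqrt_div h1E.le, Real.sqrt_sq hE.le]
    have hs1E : 0 < Real.sqrt (1 - E ^ 2) := Real.sqrt_pos.2 h1E
    have hexp2 : Real.exp (2 * t / θ) = 1 / E ^ 2 := by
      field_simp at hEinv ⊢; linarith [hEinv]
    -- compute f t and f' t in terms of E
    have hft : f t = C * E / Real.sqrt (1 - E ^ 2) := by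
      rw [hf]
      simp only [hsub]
      field_simp
    have habs : |f' t| = C * (Real.exp (2 * t / θ) * (2 / θ)) /
        (2 * Real.sqrt (Real.exp (2 * t / θ) - 1) * (Real.exp (2 * t / θ) - 1)) := by
      have h0 := hh t ht'
      have hs0 : 0 < Real.sqrt (Real.exp (2 * t / θ) - 1) := Real.sqrt_pos.2 h0
      have hsq : (Real.sqrt (Real.exp (2 * t / θ) - 1)) ^ 2 = Real.exp (2 * t / θ) - 1 :=
        Real.sq_sqrt h0.le
      have hneg : f' t ≤ 0 := by
        simp only [hf']
        apply mul_nonpos_of_nonneg_of_nonpos hC0.le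
        apply div_nonpos_of_nonpos_of_nonneg
        · rw [neg_nonpos]; positivity
        · positivity
      rw [abs_of_nonpos hneg]
      simp only [hf']
      rw [hsq]
      field_simp
    -- now unfold everything
    have hexparg : -((x₀ - μ * θ) ^ 2 * Real.exp (-2 * t / θ)) /
        (σ ^ 2 * θ * (1 - Real.exp (-2 * t / θ))) = -(f t) ^ 2 := by
      rw [hft, hE2sq]
      have : (x₀ - μ * θ) ^ 2 = a ^ 2 := by rw [ha]; ring
      rw [this, hC]
      field_simp [Real.sq_sqrt h1E.le, Real.sq_sqrt hθ.le, Real.mul_self_sqrt hθ.le,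
        Real.mul_self_sqrt h1E.le]
      ring_nf
      rw [Real.sq_sqrt hθ.le, Real.sq_sqrt h1E.le]
      ring
    rw [smul_eq_mul, hg]
    simp only
    rw [hexparg.symm]
    unfold fptDensityMuTheta
    rw [habs, hsub, hhval, hexp2]
    rw [← ha, hE2sq, ← hEdef]
    rw [rpow_three_halves hθ, rpow_three_halves h1E]
    rw [hC]
    have hπ : 0 < Real.sqrt π := Real.sqrt_pos.2 Real.pi_pos
    set s1 : ℝ := Real.sqrt θ with hs1def
    set s2 : ℝ := Real.sqrt (1 - E ^ 2) with hs2def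
    have hθeq : θ = s1 * s1 := (Real.mul_self_sqrt hθ.le).symm
    have h1Eeq : 1 - E ^ 2 = s2 * s2 := (Real.mul_self_sqrt h1E.le).symm
    rw [hθeq, h1Eeq]
    have hs2' : (0 : ℝ) < s2 := hs1E
    field_simp
  -- put it together
  calc ∫ t in Set.Ioi (0 : ℝ), fptDensityMuTheta θ σ μ x₀ t
      = ∫ t in Set.Ioi (0 : ℝ), |f' t| • g (f t) := by
        refine setIntegral_congr_fun measurableSet_Ioi fun t ht => (hpt t ht).symm
    _ = ∫ s in f '' Set.Ioi (0 : ℝ), g s :=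
        (integral_image_eq_integral_abs_deriv_smul measurableSet_Ioi hderiv hinj g).symm
    _ = ∫ s in Set.Ioi (0 : ℝ), g s := by rw [himg]
    _ = 1 := hgauss
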